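/- Let k ≥ 1, let α₀, α₁, …, α_k > 0 and σ₀, σ₁, …, σ_k > 0 be real numbers with α* = α₀ + ⋯ + α_k, and let h : [0, ∞) → [0, ∞] be measurable with ∫₀^∞ z^{α* - 1} h(z) dz = Γ(α*)/π^{α*}. Then ∫_{(0,∞)} ∫_{(0,∞)^k} (π^{α*} / ∏_{i=0}^k (σ_i^{2α_i} Γ(α_i))) · s^{α* - 1} · ∏_{i=1}^k f_i^{α_i - 1} · h(s σ₀^{-2} (1 + σ₀² Σ_{i=1}^k σ_i^{-2} f_i)) df ds = 1; that is, the multivariate generalised gamma–beta type II density with parameters (α₀,…,α_k; σ₀²,…,σ_k²; h) integrates to 1. -/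

import Mathlib

open MeasureTheory Set
open scoped ENNReal

lemma shift_lemma (g : ℝ → ℝ≥0∞) (hg : Measurable g) (c : ℝ) {s : Set ℝ} (hs : MeasurableSet s) :
    ∫⁻ y in (c + ·) ⁻¹' s, g (c + y) = ∫⁻ z in s, g z := by
  rw [← lintegral_map hg (measurable_const_add c), ← Measure.restrict_map (measurable_const_add c) hs,
    map_add_left_eq_self volume c]

lemma scale_lemma (g : ℝ → ℝ≥0∞) (hg : Measurable g) {c : ℝ} (hc : 0 < c) {s : Set ℝ}
    (hs : MeasurableSet s) :
    ∫⁻ y in (c * ·) ⁻¹' s, g (c * y) = ENNReal.ofReal c⁻¹ * ∫⁻ z in s, g z := by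
  rw [← lintegral_map hg (measurable_const_mul c), ← Measure.restrict_map (measurable_const_mul c) hs,
    Real.map_volume_mul_left hc.ne', Measure.restrict_smul, lintegral_smul_measure,
    abs_of_pos (inv_pos.2 hc), smul_eq_mul]

lemma beta_complex_eq (a b : ℝ) :
    Complex.betaIntegral a b = ((∫ x in (0:ℝ)..1, x ^ (a-1) * (1-x) ^ (b-1) : ℝ) : ℂ) := by
  rw [Complex.betaIntegral, ← intervalIntegral.integral_ofReal]
  refine intervalIntegral.integral_congr fun x hx => ?_
  rw [uIcc_of_le zero_le_one] at hx
  have e1 : ((a:ℂ) - 1) = ((a - 1 : ℝ) : ℂ) := by push_cast; ring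
  have e2 : ((b:ℂ) - 1) = ((b - 1 : ℝ) : ℂ) := by push_cast; ring
  have e3 : (1 - (x:ℂ)) = ((1 - x : ℝ) : ℂ) := by push_cast; ring
  rw [e1, e2, e3, ← Complex.ofReal_cpow hx.1, ← Complex.ofReal_cpow (by linarith [hx.2]),
    ← Complex.ofReal_mul]

lemma beta_real (a b : ℝ) (ha : 0 < a) (hb : 0 < b) :
    ∫ x in (0:ℝ)..1, x ^ (a-1) * (1-x) ^ (b-1) =
      Real.Gamma a * Real.Gamma b / Real.Gamma (a+b) := by
  have hab : Real.Gamma (a+b) ≠ 0 := (Real.Gamma_pos_of_pos (by linarith)).ne'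
  have h1 := Complex.Gamma_mul_Gamma_eq_betaIntegral (s := (a:ℂ)) (t := (b:ℂ))
    (by simpa using ha) (by simpa using hb)
  rw [beta_complex_eq a b, ← Complex.ofReal_add, Complex.Gamma_ofReal, Complex.Gamma_ofReal,
    Complex.Gamma_ofReal, ← Complex.ofReal_mul, ← Complex.ofReal_mul] at h1
  field_simp
  rw [mul_comm]
  exact_mod_cast h1.symm

lemma beta_integrable (a b : ℝ) (ha : 0 < a) (hb : 0 < b) :
    IntegrableOn (fun x : ℝ => x ^ (a-1) * (1-x) ^ (b-1)) (Ioc 0 1) := by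
  have h := (Complex.betaIntegral_convergent (u := (a:ℂ)) (v := (b:ℂ))
    (by simpa using ha) (by simpa using hb)).norm
  rw [intervalIntegrable_iff_integrableOn_Ioc_of_le zero_le_one] at h
  refine h.congr_fun (fun x hx => ?_) measurableSet_Ioc
  have e1 : ((a:ℂ) - 1) = ((a - 1 : ℝ) : ℂ) := by push_cast; ring
  have e2 : ((b:ℂ) - 1) = ((b - 1 : ℝ) : ℂ) := by push_cast; ring
  have e3 : (1 - (x:ℂ)) = ((1 - x : ℝ) : ℂ) := by push_cast; ring
  beta_reduce
  rw [e1, e2, e3, ← Complex.ofReal_cpow hx.1.le, ← Complex.ofReal_cpow (by linarith [hx.2]),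
    ← Complex.ofReal_mul, Complex.norm_real, Real.norm_eq_abs, abs_of_nonneg]
  exact mul_nonneg (Real.rpow_nonneg hx.1.le _) (Real.rpow_nonneg (by linarith [hx.2]) _)

lemma beta_enn_one (a b : ℝ) (ha : 0 < a) (hb : 0 < b) :
    ∫⁻ x in Ioo (0:ℝ) 1, ENNReal.ofReal (x ^ (a-1) * (1-x) ^ (b-1)) =
      ENNReal.ofReal (Real.Gamma a * Real.Gamma b / Real.Gamma (a+b)) := by
  rw [Measure.restrict_congr_set Ioo_ae_eq_Ioc,
    ← ofReal_integral_eq_lintegral_ofReal (beta_integrable a b ha hb)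
      ((ae_restrict_iff' measurableSet_Ioc).2 (Filter.Eventually.of_forall fun x hx =>
        mul_nonneg (Real.rpow_nonneg hx.1.le _) (Real.rpow_nonneg (by linarith [hx.2]) _))),
    ← intervalIntegral.integral_of_le zero_le_one, beta_real a b ha hb]

lemma beta_enn (a b z : ℝ) (ha : 0 < a) (hb : 0 < b) (hz : 0 < z) :
    ∫⁻ x in Ioo (0:ℝ) z, ENNReal.ofReal (x ^ (a-1) * (z-x) ^ (b-1)) =
      ENNReal.ofReal (z ^ (a+b-1) * (Real.Gamma a * Real.Gamma b / Real.Gamma (a+b))) := by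
  have hpre : (z * ·) ⁻¹' (Ioo (0:ℝ) z) = Ioo 0 1 := by
    ext t
    simp only [mem_preimage, mem_Ioo]
    constructor
    · rintro ⟨h1, h2⟩
      have ht : 0 < t := by by_contra hc; push_neg at hc; nlinarith
      exact ⟨ht, by nlinarith⟩
    · rintro ⟨h1, h2⟩
      exact ⟨by positivity, by nlinarith⟩
  have hmeas : Measurable fun x : ℝ => ENNReal.ofReal (x ^ (a-1) * (z-x) ^ (b-1)) := by
    fun_prop
  have hsc := scale_lemma (fun x => ENNReal.ofReal (x ^ (a-1) * (z-x) ^ (b-1))) hmeas hz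
    (s := Ioo 0 z) measurableSet_Ioo
  rw [hpre] at hsc
  have key : ∫⁻ y in Ioo (0:ℝ) 1, ENNReal.ofReal ((z*y) ^ (a-1) * (z-z*y) ^ (b-1)) =
      ENNReal.ofReal (z ^ (a+b-2)) *
        ∫⁻ y in Ioo (0:ℝ) 1, ENNReal.ofReal (y ^ (a-1) * (1-y) ^ (b-1)) := by
    rw [← lintegral_const_mul _ (by fun_prop)]
    refine setLIntegral_congr_fun measurableSet_Ioo (fun y hy => ?_)
    have h1y : (0:ℝ) ≤ 1 - y := by linarith [hy.2]
    have hr : (z*y) ^ (a-1) * (z-z*y) ^ (b-1) =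
        z ^ (a+b-2) * (y ^ (a-1) * (1-y) ^ (b-1)) := by
      have : z - z*y = z * (1-y) := by ring
      have he : a - 1 + (b - 1) = a + b - 2 := by ring
      rw [this, Real.mul_rpow hz.le hy.1.le, Real.mul_rpow hz.le h1y, mul_mul_mul_comm,
        ← Real.rpow_add hz, he]
    rw [hr, ENNReal.ofReal_mul (Real.rpow_nonneg hz.le _)]
  rw [key, beta_enn_one a b ha hb] at hsc
  have : (ENNReal.ofReal z) * (ENNReal.ofReal z⁻¹ *
      ∫⁻ x in Ioo (0:ℝ) z, ENNReal.ofReal (x ^ (a-1) * (z-x) ^ (b-1))) =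
      ∫⁻ x in Ioo (0:ℝ) z, ENNReal.ofReal (x ^ (a-1) * (z-x) ^ (b-1)) := by
    rw [← mul_assoc, ← ENNReal.ofReal_mul hz.le, mul_inv_cancel₀ hz.ne', ENNReal.ofReal_one,
      one_mul]
  rw [← this, ← hsc, ← mul_assoc, ← ENNReal.ofReal_mul hz.le,
    ← ENNReal.ofReal_mul (by positivity : (0:ℝ) ≤ z * z ^ (a+b-2))]
  have hz2 := Real.rpow_add hz 1 (a+b-2)
  rw [Real.rpow_one] at hz2
  rw [← hz2]
  rw [show (1:ℝ)+(a+b-2)=a+b-1 from by ring]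

lemma lemC (a b : ℝ) (ha : 0 < a) (hb : 0 < b) (g : ℝ → ℝ≥0∞) (hg : Measurable g) :
    ∫⁻ x in Ioi (0:ℝ), ENNReal.ofReal (x ^ (a-1)) *
        ∫⁻ y in Ioi (0:ℝ), ENNReal.ofReal (y ^ (b-1)) * g (x + y)
    = ENNReal.ofReal (Real.Gamma a * Real.Gamma b / Real.Gamma (a+b)) *
        ∫⁻ z in Ioi (0:ℝ), ENNReal.ofReal (z ^ (a+b-1)) * g z := by
  set F : ℝ × ℝ → ℝ≥0∞ := fun q =>
    {q : ℝ × ℝ | q.1 < q.2}.indicator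
      (fun q => ENNReal.ofReal (q.1 ^ (a-1)) * ENNReal.ofReal ((q.2 - q.1) ^ (b-1)) * g q.2) q
    with hF
  have hsetm : MeasurableSet {q : ℝ × ℝ | q.1 < q.2} := measurableSet_lt measurable_fst measurable_snd
  have hFm : Measurable F := by
    refine Measurable.indicator ?_ hsetm
    fun_prop
  -- step 1 : inner integral rewriting
  have step1 : ∀ x : ℝ, x ∈ Ioi (0:ℝ) →
      ENNReal.ofReal (x ^ (a-1)) * (∫⁻ y in Ioi (0:ℝ), ENNReal.ofReal (y ^ (b-1)) * g (x + y))
      = ∫⁻ z in Ioi (0:ℝ), F (x, z) := by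
    intro x hx
    have hpre : (x + ·) ⁻¹' (Ioi x) = Ioi 0 := by
      ext y; simp
    have h1 : (∫⁻ y in Ioi (0:ℝ), ENNReal.ofReal (y ^ (b-1)) * g (x + y))
        = ∫⁻ z in Ioi x, ENNReal.ofReal ((z - x) ^ (b-1)) * g z := by
      rw [← shift_lemma (fun z => ENNReal.ofReal ((z - x) ^ (b-1)) * g z) (by fun_prop) x
        measurableSet_Ioi, hpre]
      simp
    rw [h1, ← lintegral_const_mul _ (by fun_prop)]
    have h2 : ∫⁻ z in Ioi (0:ℝ), F (x, z)
        = ∫⁻ z in Ioi x, ENNReal.ofReal (x ^ (a-1)) * (ENNReal.ofReal ((z - x) ^ (b-1)) * g z) := by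
      have : ∀ z : ℝ, F (x, z) = (Ioi x).indicator
          (fun z => ENNReal.ofReal (x ^ (a-1)) * (ENNReal.ofReal ((z - x) ^ (b-1)) * g z)) z := by
        intro z
        by_cases hz : x < z <;> simp [hF, Set.indicator, hz, mul_assoc]
      simp_rw [this]
      rw [lintegral_indicator measurableSet_Ioi, Measure.restrict_restrict measurableSet_Ioi,
        Set.Ioi_inter_Ioi, max_eq_left (le_of_lt hx)]
    rw [h2]
  rw [setLIntegral_congr_fun measurableSet_Ioi step1]
  rw [lintegral_lintegral_swap hFm.aemeasurable]
  -- now for fixed z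
  have step2 : ∀ z : ℝ, z ∈ Ioi (0:ℝ) →
      (∫⁻ x in Ioi (0:ℝ), F (x, z)) =
        ENNReal.ofReal (Real.Gamma a * Real.Gamma b / Real.Gamma (a+b)) *
          (ENNReal.ofReal (z ^ (a+b-1)) * g z) := by
    intro z hz
    have h3 : ∀ x : ℝ, F (x, z) = (Iio z).indicator
        (fun x => ENNReal.ofReal (x ^ (a-1)) * ENNReal.ofReal ((z - x) ^ (b-1)) * g z) x := by
      intro x
      by_cases hxz : x < z <;> simp [hF, Set.indicator, hxz]
    simp_rw [h3]
    rw [lintegral_indicator measurableSet_Iio, Measure.restrict_restrict measurableSet_Iio]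
    have : Iio z ∩ Ioi (0:ℝ) = Ioo 0 z := by ext t; simp [mem_Ioo, and_comm]
    rw [this, lintegral_mul_const _ (by fun_prop)]
    have h4 : ∫⁻ x in Ioo (0:ℝ) z, ENNReal.ofReal (x ^ (a-1)) * ENNReal.ofReal ((z - x) ^ (b-1))
        = ENNReal.ofReal (z ^ (a+b-1) * (Real.Gamma a * Real.Gamma b / Real.Gamma (a+b))) := by
      rw [← beta_enn a b z ha hb hz]
      refine setLIntegral_congr_fun measurableSet_Ioo (fun x hx => ?_)
      rw [← ENNReal.ofReal_mul (Real.rpow_nonneg hx.1.le _)]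
    rw [h4, ENNReal.ofReal_mul (Real.rpow_nonneg (le_of_lt hz) _)]
    ring
  rw [setLIntegral_congr_fun measurableSet_Ioi step2,
    lintegral_const_mul _ (by fun_prop)]

lemma scale_Ioi (g : ℝ → ℝ≥0∞) (hg : Measurable g) {c : ℝ} (hc : 0 < c) :
    ∫⁻ x in Ioi (0:ℝ), g (c * x) = ENNReal.ofReal c⁻¹ * ∫⁻ z in Ioi (0:ℝ), g z := by
  have hpre : (c * ·) ⁻¹' (Ioi (0:ℝ)) = Ioi 0 := by
    ext t
    simp only [mem_preimage, mem_Ioi]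
    exact ⟨fun h => by nlinarith, fun h => by positivity⟩
  rw [← hpre, scale_lemma g hg hc measurableSet_Ioi]
  rw [hpre]

lemma lemB1 (a : ℝ) (ha : 0 < a) {c : ℝ} (hc : 0 < c) (g : ℝ → ℝ≥0∞) (hg : Measurable g) :
    ∫⁻ x in Ioi (0:ℝ), ENNReal.ofReal (x ^ (a-1)) * g (c * x)
    = ENNReal.ofReal (c ^ (-a)) * ∫⁻ z in Ioi (0:ℝ), ENNReal.ofReal (z ^ (a-1)) * g z := by
  set G : ℝ → ℝ≥0∞ := fun u => ENNReal.ofReal (c ^ (1-a)) * (ENNReal.ofReal (u ^ (a-1)) * g u)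
    with hG
  have hGm : Measurable G := by fun_prop
  have key : ∀ x : ℝ, x ∈ Ioi (0:ℝ) →
      ENNReal.ofReal (x ^ (a-1)) * g (c * x) = G (c * x) := by
    intro x hx
    rw [hG]
    simp only
    rw [← mul_assoc, ← ENNReal.ofReal_mul (Real.rpow_nonneg hc.le _),
      Real.mul_rpow hc.le (le_of_lt hx), ← mul_assoc, ← Real.rpow_add hc,
      show (1-a) + (a-1) = 0 from by ring, Real.rpow_zero, one_mul]
  rw [setLIntegral_congr_fun measurableSet_Ioi key,
    scale_Ioi G hGm hc, hG]
  simp only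
  rw [lintegral_const_mul _ (by fun_prop), ← mul_assoc, ← ENNReal.ofReal_mul (by positivity),
    show c⁻¹ * c ^ (1-a) = c ^ (-a) from by
      rw [← Real.rpow_neg_one c, ← Real.rpow_add hc, show (-1) + (1-a) = -a from by ring]]

lemma lemC' (a b : ℝ) (ha : 0 < a) (hb : 0 < b) {c : ℝ} (hc : 0 < c)
    (g : ℝ → ℝ≥0∞) (hg : Measurable g) :
    ∫⁻ x in Ioi (0:ℝ), ENNReal.ofReal (x ^ (a-1)) *
        ∫⁻ z in Ioi (0:ℝ), ENNReal.ofReal (z ^ (b-1)) * g (c * x + z)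
    = ENNReal.ofReal (c ^ (-a) * (Real.Gamma a * Real.Gamma b / Real.Gamma (a+b))) *
        ∫⁻ z in Ioi (0:ℝ), ENNReal.ofReal (z ^ (a+b-1)) * g z := by
  set Inner : ℝ → ℝ≥0∞ := fun u => ∫⁻ z in Ioi (0:ℝ), ENNReal.ofReal (z ^ (b-1)) * g (u + z)
    with hInner
  have hInnerm : Measurable Inner := by
    apply Measurable.lintegral_prod_right (f := fun u z => ENNReal.ofReal (z ^ (b-1)) * g (u + z))
    fun_prop
  have : ∫⁻ x in Ioi (0:ℝ), ENNReal.ofReal (x ^ (a-1)) *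
      ∫⁻ z in Ioi (0:ℝ), ENNReal.ofReal (z ^ (b-1)) * g (c * x + z)
      = ∫⁻ x in Ioi (0:ℝ), ENNReal.ofReal (x ^ (a-1)) * Inner (c * x) := rfl
  rw [this, lemB1 a ha hc Inner hInnerm, hInner]
  simp only
  rw [lemC a b ha hb g hg, ← mul_assoc, ← ENNReal.ofReal_mul (Real.rpow_nonneg hc.le _)]

noncomputable abbrev μ₀ : Measure ℝ := (volume : Measure ℝ).restrict (Ioi 0)

lemma pi_restrict (k : ℕ) :
    (volume : Measure (Fin k → ℝ)).restrict (Set.univ.pi fun _ => Ioi (0:ℝ))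
    = Measure.pi (fun _ : Fin k => μ₀) := by
  refine (Measure.pi_eq (μ := fun _ : Fin k => μ₀) fun t ht => ?_).symm
  rw [Measure.restrict_apply (MeasurableSet.univ_pi fun i => ht i),
    ← Set.pi_inter_distrib, volume_pi, Measure.pi_pi]
  simp_rw [Measure.restrict_apply (ht _)]

lemma lemM : ∀ (k : ℕ) (a c : Fin (k+1) → ℝ), (∀ i, 0 < a i) → (∀ i, 0 < c i) →
    ∀ (g : ℝ → ℝ≥0∞), Measurable g →
    (∫⁻ x : Fin (k+1) → ℝ,
        (∏ i, ENNReal.ofReal ((x i) ^ (a i - 1))) * g (∑ i, c i * x i)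
        ∂(Measure.pi fun _ => μ₀))
    = ENNReal.ofReal ((∏ i, Real.Gamma (a i) * (c i) ^ (-(a i))) / Real.Gamma (∑ i, a i)) *
        ∫⁻ z in Ioi (0:ℝ), ENNReal.ofReal (z ^ ((∑ i, a i) - 1)) * g z := by
  intro k
  induction k with
  | zero =>
    intro a c ha hc g hg
    have hG : Real.Gamma (a 0) ≠ 0 := (Real.Gamma_pos_of_pos (ha 0)).ne'
    have mp := measurePreserving_piUnique (fun _ : Fin 1 => μ₀)
    have hmeas : Measurable fun t : ℝ => ENNReal.ofReal (t ^ (a 0 - 1)) * g (c 0 * t) := by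
      fun_prop
    have key : (∫⁻ x : Fin 1 → ℝ,
        (∏ i, ENNReal.ofReal ((x i) ^ (a i - 1))) * g (∑ i, c i * x i)
        ∂(Measure.pi fun _ => μ₀))
        = ∫⁻ t, ENNReal.ofReal (t ^ (a 0 - 1)) * g (c 0 * t) ∂μ₀ := by
      rw [← mp.lintegral_comp hmeas]
      refine lintegral_congr fun x => ?_
      simp [MeasurableEquiv.piUnique, Equiv.piUnique, Fin.prod_univ_one, Fin.sum_univ_one]
    rw [key]
    have : ∫⁻ t, ENNReal.ofReal (t ^ (a 0 - 1)) * g (c 0 * t) ∂μ₀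
        = ∫⁻ t in Ioi (0:ℝ), ENNReal.ofReal (t ^ (a 0 - 1)) * g (c 0 * t) := rfl
    rw [this, lemB1 (a 0) (ha 0) (hc 0) g hg, Fin.prod_univ_one, Fin.sum_univ_one]
    congr 2
    rw [mul_comm, mul_div_assoc, div_self hG, mul_one]
  | succ k ih =>
    intro a c ha hc g hg
    set B := ∑ i : Fin (k+1), a i.succ with hB
    have hBpos : 0 < B := Finset.sum_pos (fun i _ => ha i.succ) Finset.univ_nonempty
    have hGB : Real.Gamma B ≠ 0 := (Real.Gamma_pos_of_pos hBpos).ne'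
    have hGaB : Real.Gamma (a 0 + B) ≠ 0 :=
      (Real.Gamma_pos_of_pos (add_pos (ha 0) hBpos)).ne'
    set K : ℝ := (∏ i : Fin (k+1), Real.Gamma (a i.succ) * (c i.succ) ^ (-(a i.succ))) /
      Real.Gamma B with hK
    have hKnn : 0 ≤ K := by
      rw [hK]
      exact div_nonneg (Finset.prod_nonneg fun i _ => mul_nonneg
        (Real.Gamma_pos_of_pos (ha i.succ)).le (Real.rpow_nonneg (hc i.succ).le _))
        (Real.Gamma_pos_of_pos hBpos).le
    set J : ℝ → ℝ≥0∞ := fun y =>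
      ∫⁻ z in Ioi (0:ℝ), ENNReal.ofReal (z ^ (B - 1)) * g (c 0 * y + z) with hJ
    have hJm : Measurable J := by
      apply Measurable.lintegral_prod_right
        (f := fun y z => ENNReal.ofReal (z ^ (B-1)) * g (c 0 * y + z))
      fun_prop
    set Φ : (Fin (k+1+1) → ℝ) → ℝ≥0∞ := fun x =>
      (∏ i, ENNReal.ofReal ((x i) ^ (a i - 1))) * g (∑ i, c i * x i) with hΦ
    have hΦm : Measurable Φ := by
      apply Measurable.mul
      · exact Finset.measurable_prod _ (fun i _ => by fun_prop)
      · fun_prop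
    have hcons : Measurable (fun p : ℝ × (Fin (k+1) → ℝ) =>
        (Fin.cons p.1 p.2 : Fin (k+1+1) → ℝ)) := by
      refine measurable_pi_lambda _ (fun i => ?_)
      refine Fin.cases ?_ (fun j => ?_) i
      · simp only [Fin.cons_zero]; exact measurable_fst
      · simp only [Fin.cons_succ]; exact (measurable_pi_apply j).comp measurable_snd
    have mp := (measurePreserving_piFinSuccAbove (fun _ : Fin (k+1+1) => μ₀) 0).symm
    have step : (∫⁻ x : Fin (k+1+1) → ℝ, Φ x ∂(Measure.pi fun _ => μ₀))
        = ∫⁻ p : ℝ × (Fin (k+1) → ℝ),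
            Φ (Fin.cons p.1 p.2) ∂(μ₀.prod (Measure.pi fun _ => μ₀)) := by
      rw [← mp.lintegral_comp hΦm]
      refine lintegral_congr fun p => ?_
      congr 1
      simp [MeasurableEquiv.piFinSuccAbove_symm_apply, Fin.insertNthEquiv, Fin.insertNth_zero]
    rw [step, lintegral_prod (fun p => Φ (Fin.cons p.1 p.2))
      (Measurable.aemeasurable (by exact hΦm.comp hcons))]
    have inner_eq : ∀ y : ℝ, y ∈ Ioi (0:ℝ) →
        (∫⁻ w : Fin (k+1) → ℝ, Φ (Fin.cons y w) ∂(Measure.pi fun _ => μ₀))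
        = ENNReal.ofReal (y ^ (a 0 - 1)) * (ENNReal.ofReal K * J y) := by
      intro y hy
      have hptw : ∀ w : Fin (k+1) → ℝ, Φ (Fin.cons y w) =
          ENNReal.ofReal (y ^ (a 0 - 1)) *
            ((∏ i : Fin (k+1), ENNReal.ofReal ((w i) ^ (a i.succ - 1))) *
              g (c 0 * y + ∑ i : Fin (k+1), c i.succ * w i)) := by
        intro w
        rw [hΦ]
        simp only [Fin.prod_univ_succ, Fin.sum_univ_succ, Fin.cons_zero, Fin.cons_succ]
        ring
      simp_rw [hptw]
      rw [lintegral_const_mul _ (by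
        apply Measurable.mul
        · exact Finset.measurable_prod _ (fun i _ => by fun_prop)
        · fun_prop)]
      congr 1
      rw [ih (fun i => a i.succ) (fun i => c i.succ) (fun i => ha i.succ)
        (fun i => hc i.succ) (fun u => g (c 0 * y + u)) (by fun_prop), hJ, hK, hB]
    rw [setLIntegral_congr_fun measurableSet_Ioi inner_eq]
    have reorg : ∀ y : ℝ, y ∈ Ioi (0:ℝ) →
        ENNReal.ofReal (y ^ (a 0 - 1)) * (ENNReal.ofReal K * J y)
        = ENNReal.ofReal K * (ENNReal.ofReal (y ^ (a 0 - 1)) * J y) :=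
      fun y _ => mul_left_comm _ _ _
    rw [setLIntegral_congr_fun measurableSet_Ioi reorg,
      lintegral_const_mul _ (by fun_prop : Measurable fun y =>
        ENNReal.ofReal (y ^ (a 0 - 1)) * J y)]
    rw [hJ]
    simp only
    rw [lemC' (a 0) B (ha 0) hBpos (hc 0) g hg, ← mul_assoc, ← ENNReal.ofReal_mul hKnn]
    have hsum : ∑ i : Fin (k+1+1), a i = a 0 + B := by
      rw [Fin.sum_univ_succ, hB]
    rw [hsum]
    congr 2
    rw [hK, Fin.prod_univ_succ (f := fun i : Fin (k+1+1) => Real.Gamma (a i) * (c i) ^ (-(a i)))]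
    field_simp
/-- The multivariate generalised gamma–beta type II density with parameters
`(α₀,…,α_k; σ₀²,…,σ_k²; h)` integrates to 1 over `(0,∞) × (0,∞)^k`, whenever the
generator `h` satisfies `∫₀^∞ z^{α*-1} h(z) dz = Γ(α*)/π^{α*}`, `α* = α₀ + Σ αᵢ`. -/
theorem stmt15 (k : ℕ) (hk : 1 ≤ k) (α₀ σ₀ : ℝ) (hα₀ : 0 < α₀) (hσ₀ : 0 < σ₀)
    (α σ : Fin k → ℝ) (hα : ∀ i, 0 < α i) (hσ : ∀ i, 0 < σ i)
    (αstar : ℝ) (hs : αstar = α₀ + ∑ i, α i)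
    (h : ℝ → ℝ≥0∞) (hh : Measurable h)
    (hnorm : ∫⁻ z in Set.Ioi (0 : ℝ), ENNReal.ofReal (z ^ (αstar - 1)) * h z =
      ENNReal.ofReal (Real.Gamma αstar / Real.pi ^ αstar)) :
    ∫⁻ s in Set.Ioi (0 : ℝ),
      ∫⁻ f : Fin k → ℝ in Set.univ.pi (fun _ : Fin k => Set.Ioi (0 : ℝ)),
        ENNReal.ofReal (Real.pi ^ αstar /
            (σ₀ ^ (2 * α₀) * Real.Gamma α₀ *
              ∏ i, (σ i ^ (2 * α i) * Real.Gamma (α i)))) *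
          ENNReal.ofReal (s ^ (αstar - 1)) *
          (∏ i, ENNReal.ofReal ((f i) ^ (α i - 1))) *
          h (s * (σ₀ ^ 2)⁻¹ * (1 + σ₀ ^ 2 * ∑ i, ((σ i) ^ 2)⁻¹ * f i)) = 1 := by
  obtain ⟨m, rfl⟩ : ∃ m, k = m + 1 := ⟨k - 1, by omega⟩
  subst hs
  set A := ∑ i, α i with hA
  have hApos : 0 < A := Finset.sum_pos (fun i _ => hα i) Finset.univ_nonempty
  have hΓA : 0 < Real.Gamma A := Real.Gamma_pos_of_pos hApos
  have hΓ0 : 0 < Real.Gamma α₀ := Real.Gamma_pos_of_pos hα₀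
  have hΓstar : 0 < Real.Gamma (α₀ + A) := Real.Gamma_pos_of_pos (add_pos hα₀ hApos)
  have hπ : (0:ℝ) < Real.pi ^ (α₀ + A) := Real.rpow_pos_of_pos Real.pi_pos _
  have hσ₀2 : (0:ℝ) < σ₀ ^ 2 := by positivity
  have hσ2 : ∀ i, (0:ℝ) < (σ i) ^ 2 := fun i => by have := hσ i; positivity
  have hsq : ∀ (t : ℝ), 0 < t → ∀ b : ℝ, ((t^2)⁻¹ : ℝ) ^ (-b) = t ^ (2*b) := by
    intro t ht b
    rw [Real.inv_rpow (by positivity), ← Real.rpow_neg (by positivity), neg_neg,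
      ← Real.rpow_natCast t 2, ← Real.rpow_mul ht.le]
    norm_num
  set Cr : ℝ := Real.pi ^ (α₀ + A) /
      (σ₀ ^ (2 * α₀) * Real.Gamma α₀ * ∏ i, (σ i ^ (2 * α i) * Real.Gamma (α i))) with hCr
  have hσ₀r : (0:ℝ) < σ₀ ^ (2*α₀) := Real.rpow_pos_of_pos hσ₀ _
  have hprodpos : (0:ℝ) < ∏ i, (σ i ^ (2 * α i) * Real.Gamma (α i)) :=
    Finset.prod_pos fun i _ => mul_pos (Real.rpow_pos_of_pos (hσ i) _)
      (Real.Gamma_pos_of_pos (hα i))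
  have hCrpos : 0 < Cr := by rw [hCr]; positivity
  set D : ℝ := (∏ i, Real.Gamma (α i) * (σ i) ^ (2 * α i)) / Real.Gamma A with hD
  have hDpos : 0 < D := by
    rw [hD]
    exact div_pos (Finset.prod_pos fun i _ => mul_pos (Real.Gamma_pos_of_pos (hα i))
      (Real.rpow_pos_of_pos (hσ i) _)) hΓA
  set J : ℝ → ℝ≥0∞ := fun s =>
    ∫⁻ z in Ioi (0:ℝ), ENNReal.ofReal (z ^ (A - 1)) * h ((σ₀^2)⁻¹ * s + z) with hJ
  have hJm : Measurable J := by
    apply Measurable.lintegral_prod_right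
      (f := fun s z => ENNReal.ofReal (z ^ (A-1)) * h ((σ₀^2)⁻¹ * s + z))
    fun_prop
  have hinner : ∀ s : ℝ, s ∈ Ioi (0:ℝ) →
      (∫⁻ f : Fin (m+1) → ℝ in Set.univ.pi (fun _ : Fin (m+1) => Set.Ioi (0 : ℝ)),
        ENNReal.ofReal Cr * ENNReal.ofReal (s ^ (α₀ + A - 1)) *
          (∏ i, ENNReal.ofReal ((f i) ^ (α i - 1))) *
          h (s * (σ₀ ^ 2)⁻¹ * (1 + σ₀ ^ 2 * ∑ i, ((σ i) ^ 2)⁻¹ * f i)))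
      = ENNReal.ofReal (Cr * D) * (ENNReal.ofReal (s ^ (α₀ - 1)) * J s) := by
    intro s hs'
    set g : ℝ → ℝ≥0∞ := fun u => h ((σ₀^2)⁻¹ * s + u) with hg
    have hgm : Measurable g := by rw [hg]; fun_prop
    have harg : ∀ f : Fin (m+1) → ℝ,
        s * (σ₀ ^ 2)⁻¹ * (1 + σ₀ ^ 2 * ∑ i, ((σ i) ^ 2)⁻¹ * f i)
        = (σ₀^2)⁻¹ * s + ∑ i, (s * ((σ i) ^ 2)⁻¹) * f i := by
      intro f
      have h1 : s * (σ₀ ^ 2)⁻¹ * (1 + σ₀ ^ 2 * ∑ i, ((σ i) ^ 2)⁻¹ * f i)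
          = (σ₀^2)⁻¹ * s + s * ∑ i, ((σ i) ^ 2)⁻¹ * f i := by
        field_simp
      rw [h1, Finset.mul_sum]
      congr 1
      exact Finset.sum_congr rfl fun i _ => (mul_assoc _ _ _).symm
    have e1 : ∀ f : Fin (m+1) → ℝ,
        ENNReal.ofReal Cr * ENNReal.ofReal (s ^ (α₀ + A - 1)) *
          (∏ i, ENNReal.ofReal ((f i) ^ (α i - 1))) *
          h (s * (σ₀ ^ 2)⁻¹ * (1 + σ₀ ^ 2 * ∑ i, ((σ i) ^ 2)⁻¹ * f i))
        = (ENNReal.ofReal Cr * ENNReal.ofReal (s ^ (α₀ + A - 1))) *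
          ((∏ i, ENNReal.ofReal ((f i) ^ (α i - 1))) *
            g (∑ i, (s * ((σ i) ^ 2)⁻¹) * f i)) := by
      intro f
      rw [hg]
      simp only
      rw [harg f, mul_assoc]
    simp_rw [e1]
    rw [lintegral_const_mul _ (by
      apply Measurable.mul
      · exact Finset.measurable_prod _ (fun i _ => by fun_prop)
      · exact hgm.comp (by fun_prop))]
    rw [pi_restrict (m+1)]
    rw [lemM m α (fun i => s * ((σ i)^2)⁻¹) hα
      (fun i => mul_pos hs' (inv_pos.2 (hσ2 i))) g hgm]
    have hKs : (∏ i, Real.Gamma (α i) * (s * ((σ i)^2)⁻¹) ^ (-(α i))) / Real.Gamma A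
        = D * s ^ (-A) := by
      have hfac : ∀ i : Fin (m+1), Real.Gamma (α i) * (s * ((σ i)^2)⁻¹) ^ (-(α i))
          = (Real.Gamma (α i) * (σ i) ^ (2 * α i)) * s ^ (-(α i)) := by
        intro i
        rw [Real.mul_rpow hs'.le (inv_nonneg.2 (hσ2 i).le), hsq (σ i) (hσ i) (α i)]
        ring
      rw [Finset.prod_congr rfl (fun i _ => hfac i), Finset.prod_mul_distrib,
        ← Real.rpow_sum_of_pos hs' (fun i => -(α i)) Finset.univ]
      rw [hD]
      have hsum : ∑ i : Fin (m+1), -(α i) = -A := by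
        rw [hA, ← Finset.sum_neg_distrib]
      rw [hsum]
      ring
    rw [hKs]
    have hJeq : (∫⁻ z in Ioi (0:ℝ), ENNReal.ofReal (z ^ (A - 1)) * g z) = J s := rfl
    rw [hJeq]
    have hpow : s ^ (α₀ + A - 1) * s ^ (-A) = s ^ (α₀ - 1) := by
      rw [← Real.rpow_add hs', show α₀ + A - 1 + -A = α₀ - 1 from by ring]
    have hreal : Cr * s ^ (α₀ + A - 1) * (D * s ^ (-A)) = Cr * D * s ^ (α₀ - 1) := by
      calc Cr * s ^ (α₀ + A - 1) * (D * s ^ (-A))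
          = Cr * D * (s ^ (α₀ + A - 1) * s ^ (-A)) := by ring
        _ = Cr * D * s ^ (α₀ - 1) := by rw [hpow]
    rw [← mul_assoc, ← ENNReal.ofReal_mul hCrpos.le,
      ← ENNReal.ofReal_mul (mul_nonneg hCrpos.le (Real.rpow_nonneg hs'.le _)), hreal,
      ENNReal.ofReal_mul (mul_nonneg hCrpos.le hDpos.le), mul_assoc]
  rw [setLIntegral_congr_fun measurableSet_Ioi hinner,
    lintegral_const_mul _ (f := fun x => ENNReal.ofReal (x ^ (α₀ - 1)) * J x)
      (Measurable.mul (by fun_prop) hJm)]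
  rw [hJ]
  simp only
  rw [lemC' α₀ A hα₀ hApos (inv_pos.2 hσ₀2) h hh, hnorm]
  rw [← ENNReal.ofReal_mul (by positivity), ← ENNReal.ofReal_mul (mul_nonneg hCrpos.le hDpos.le)]
  have hfinal : Cr * D * (((σ₀^2)⁻¹ : ℝ) ^ (-α₀) * (Real.Gamma α₀ * Real.Gamma A /
      Real.Gamma (α₀ + A)) * (Real.Gamma (α₀ + A) / Real.pi ^ (α₀ + A))) = 1 := by
    rw [hsq σ₀ hσ₀ α₀, hCr, hD]
    have hpc : ∏ i, (σ i ^ (2 * α i) * Real.Gamma (α i))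
        = ∏ i, (Real.Gamma (α i) * σ i ^ (2 * α i)) :=
      Finset.prod_congr rfl fun i _ => mul_comm _ _
    rw [hpc]
    have hPpos : (0:ℝ) < ∏ i, (Real.Gamma (α i) * σ i ^ (2 * α i)) :=
      Finset.prod_pos fun i _ => mul_pos (Real.Gamma_pos_of_pos (hα i))
        (Real.rpow_pos_of_pos (hσ i) _)
    generalize hP : (∏ i, (Real.Gamma (α i) * σ i ^ (2 * α i)) : ℝ) = P at hPpos ⊢
    generalize hS : (σ₀ ^ (2*α₀) : ℝ) = S at hσ₀r ⊢
    generalize hπg : (Real.pi ^ (α₀+A) : ℝ) = Pi at hπ ⊢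
    field_simp
  rw [hfinal, ENNReal.ofReal_one]
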